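/- A noncompact metrizable space X admits an exhaustion function (a continuous u : X → (0,1] with u(xₙ) → 0 for every sequence without accumulation points) if and only if X is locally compact and separable. -/

import Mathlib

open Set Filter Topology

/-- An exhaustion function on a metrizable space `X`: a continuous `u : X → (0,1]`
such that `u(xₙ) → 0` for every sequence with no accumulation point in `X`. -/
def ExhaustionFunction {X : Type*} [TopologicalSpace X] (u : X → ℝ) : Prop :=
  Continuous u ∧ (∀ x, u x ∈ Ioc (0:ℝ) 1) ∧
  ∀ s : ℕ → X, (∀ p : X, ¬ MapClusterPt p atTop s) →
    Tendsto (fun n => u (s n)) atTop (𝓝 0)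

/-- If a sequence has no cluster point, it eventually leaves every compact set. -/
lemma aux_eventually_not_mem {X : Type*} [TopologicalSpace X] {s : ℕ → X}
    (h : ∀ p : X, ¬ MapClusterPt p atTop s) {K : Set X} (hK : IsCompact K) :
    ∀ᶠ n in atTop, s n ∉ K := by
  by_contra hcon
  rw [Filter.not_eventually] at hcon
  have hfreq : ∃ᶠ n in atTop, s n ∈ K := hcon.mono fun n hn => not_not.mp hn
  have hne : (atTop ⊓ 𝓟 {n | s n ∈ K}).NeBot := Filter.frequently_iff_neBot.mp hfreq
  have hle : Filter.map s (atTop ⊓ 𝓟 {n | s n ∈ K}) ≤ 𝓟 K := by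
    calc Filter.map s (atTop ⊓ 𝓟 {n | s n ∈ K}) ≤ Filter.map s (𝓟 {n | s n ∈ K}) :=
          map_mono inf_le_right
      _ = 𝓟 (s '' {n | s n ∈ K}) := map_principal
      _ ≤ 𝓟 K := principal_mono.2 (by rintro _ ⟨n, hn, rfl⟩; exact hn)
  obtain ⟨p, -, hp⟩ := hK.exists_mapClusterPt hle
  exact h p (hp.mono inf_le_left)

/-- Superlevel sets of an exhaustion function are compact. -/
lemma aux_isCompact_superlevel {X : Type*} [MetricSpace X] {u : X → ℝ}
    (hu : ExhaustionFunction u) {c : ℝ} (hc : 0 < c) : IsCompact {x | c ≤ u x} := by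
  obtain ⟨hcont, hmem, hlim⟩ := hu
  apply IsSeqCompact.isCompact
  intro s hs
  have hcl : ∃ p : X, MapClusterPt p atTop s := by
    by_contra h
    push_neg at h
    have h0 := hlim s h
    have : c ≤ 0 := ge_of_tendsto h0 (Eventually.of_forall fun n => hs n)
    linarith
  obtain ⟨p, hp⟩ := hcl
  have hpS : p ∈ {x | c ≤ u x} := by
    have hclosed : IsClosed {x | c ≤ u x} := isClosed_le continuous_const hcont
    have hmemcl : p ∈ closure (range s) := by
      rw [mem_closure_iff_clusterPt]
      exact hp.clusterPt.mono (le_principal_iff.2 range_mem_map)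
    have : closure (range s) ⊆ {x | c ≤ u x} :=
      hclosed.closure_eq ▸ closure_mono (range_subset_iff.2 hs)
    exact this hmemcl
  obtain ⟨ψ, hψ, hten⟩ := TopologicalSpace.FirstCountableTopology.tendsto_subseq hp
  exact ⟨p, hpS, ψ, hψ, hten⟩

/-- A noncompact metrizable space admits an exhaustion function if and
only if it is locally compact and separable. -/
theorem stmt9 {X : Type*} [MetricSpace X] (hnc : ¬ CompactSpace X) :
    (∃ u : X → ℝ, ExhaustionFunction u) ↔
      (LocallyCompactSpace X ∧ TopologicalSpace.SeparableSpace X) := by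
  constructor
  · rintro ⟨u, hu⟩
    obtain ⟨hcont, hmem, hlim⟩ := hu
    have hK : ∀ c : ℝ, 0 < c → IsCompact {x | c ≤ u x} :=
      fun c hc => aux_isCompact_superlevel ⟨hcont, hmem, hlim⟩ hc
    haveI : WeaklyLocallyCompactSpace X := by
      refine ⟨fun x => ⟨{y | u x / 2 ≤ u y}, hK _ (by have := (hmem x).1; linarith), ?_⟩⟩
      have hopen : IsOpen {y | u x / 2 < u y} := isOpen_lt continuous_const hcont
      have hxmem : x ∈ {y | u x / 2 < u y} := by
        simp only [mem_setOf_eq]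
        have := (hmem x).1
        linarith
      exact mem_of_superset (hopen.mem_nhds hxmem) (fun y hy => le_of_lt (show u x / 2 < u y from hy))
    haveI : LocallyCompactSpace X := WeaklyLocallyCompactSpace.locallyCompactSpace
    haveI : SigmaCompactSpace X := by
      refine ⟨⟨fun n => {x | 1 / (n + 1 : ℝ) ≤ u x}, fun n => hK _ (by positivity), ?_⟩⟩
      refine iUnion_eq_univ_iff.2 fun x => ?_
      obtain ⟨n, hn⟩ := exists_nat_one_div_lt (hmem x).1
      exact ⟨n, le_of_lt hn⟩
    exact ⟨inferInstance, inferInstance⟩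
  · rintro ⟨hlc, hsep⟩
    haveI := hlc; haveI := hsep
    haveI : SecondCountableTopology X := UniformSpace.secondCountable_of_separable X
    haveI : SigmaCompactSpace X := inferInstance
    set K := CompactExhaustion.choice X with hKdef
    have hex : ∀ n : ℕ, ∃ f : C(X, ℝ), EqOn f 1 (K n) ∧ EqOn f 0 (interior (K (n+1)))ᶜ ∧
        ∀ x, f x ∈ Icc (0:ℝ) 1 := by
      intro n
      obtain ⟨f, h1, h0, -, hIcc⟩ := exists_continuous_one_zero_of_isCompact
        (K.isCompact n) isOpen_interior.isClosed_compl
        (disjoint_compl_right_iff_subset.mpr (K.subset_interior_succ n))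
      exact ⟨f, h1, h0, hIcc⟩
    choose f h1 h0 hIcc using hex
    set c : ℕ → ℝ := fun n => (1/2 : ℝ) ^ (n + 1) with hcdef
    have hc_pos : ∀ n, 0 < c n := fun n => by positivity
    have hc_sum : Summable c := by
      simpa only [hcdef, pow_succ] using (summable_geometric_two).mul_right (1/2)
    have hc_tsum : ∑' n, c n = 1 := by
      simp only [hcdef, pow_succ]
      rw [tsum_mul_right, tsum_geometric_two]
      norm_num
    have hterm_nonneg : ∀ n x, 0 ≤ c n * f n x :=
      fun n x => mul_nonneg (hc_pos n).le (hIcc n x).1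
    have hterm_le : ∀ n x, c n * f n x ≤ c n := fun n x => by
      have := (hIcc n x).2
      nlinarith [hc_pos n]
    have hsum : ∀ x, Summable fun n => c n * f n x := fun x =>
      Summable.of_nonneg_of_le (fun n => hterm_nonneg n x) (fun n => hterm_le n x) hc_sum
    set u : X → ℝ := fun x => ∑' n, c n * f n x with hudef
    have hcont : Continuous u := by
      apply continuous_tsum (fun n => continuous_const.mul (f n).continuous) hc_sum
      intro n x
      show ‖c n * f n x‖ ≤ c n
      rw [Real.norm_eq_abs, abs_of_nonneg (hterm_nonneg n x)]
      exact hterm_le n x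
    have hupos : ∀ x, 0 < u x := by
      intro x
      have hfind := K.mem_find x
      have h1x : f (K.find x) x = 1 := h1 _ hfind
      have hle : c (K.find x) * f (K.find x) x ≤ u x :=
        Summable.le_tsum (hsum x) _ (fun m _ => hterm_nonneg m x)
      rw [h1x, mul_one] at hle
      exact lt_of_lt_of_le (hc_pos _) hle
    have hule : ∀ x, u x ≤ 1 := by
      intro x
      calc u x ≤ ∑' n, c n := Summable.tsum_le_tsum (fun n => hterm_le n x) (hsum x) hc_sum
        _ = 1 := hc_tsum
    have htail : ∀ (N : ℕ) (x : X), x ∉ K N → u x ≤ (1/2 : ℝ) ^ N := by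
      intro N x hx
      have hzero : ∀ i, i < N → c i * f i x = 0 := by
        intro i hi
        have hfz : f i x = 0 := h0 i (fun hmemi => hx (K.subset hi (interior_subset hmemi)))
        rw [hfz, mul_zero]
      calc u x = ∑ i ∈ Finset.range N, c i * f i x + ∑' i, c (i + N) * f (i + N) x :=
            (Summable.sum_add_tsum_nat_add N (hsum x)).symm
        _ = ∑' i, c (i + N) * f (i + N) x := by
            rw [Finset.sum_eq_zero (fun i hi => hzero i (Finset.mem_range.1 hi)), zero_add]
        _ ≤ ∑' i, c (i + N) := Summable.tsum_le_tsum (fun i => hterm_le _ x)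
            ((summable_nat_add_iff N).2 (hsum x)) ((summable_nat_add_iff N).2 hc_sum)
        _ = ∑' i, (1/2 : ℝ) ^ (i + 1) * (1/2) ^ N := by
            refine tsum_congr fun i => ?_
            simp only [hcdef]
            rw [← pow_add]
            ring_nf
        _ = (∑' i, (1/2 : ℝ) ^ (i + 1)) * (1/2) ^ N := tsum_mul_right
        _ = (1/2 : ℝ) ^ N := by rw [show (∑' i, (1/2 : ℝ) ^ (i + 1)) = 1 from hc_tsum, one_mul]
    refine ⟨u, hcont, fun x => ⟨hupos x, hule x⟩, ?_⟩
    intro s hs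
    rw [NormedAddCommGroup.tendsto_nhds_zero]
    intro ε hε
    obtain ⟨N, hN⟩ := exists_pow_lt_of_lt_one hε (by norm_num : (1/2 : ℝ) < 1)
    have hev : ∀ᶠ n in atTop, s n ∉ K N := aux_eventually_not_mem hs (K.isCompact N)
    refine hev.mono fun n hn => ?_
    rw [Real.norm_eq_abs, abs_of_pos (hupos (s n))]
    exact lt_of_le_of_lt (htail N (s n) hn) hN
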